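/- Let U ⊆ ℝ be open, f : U → ℝ a function, x ∈ U, and L ∈ ℝ. Then f is differentiable at x with f'(x) = L if and only if for every ε > 0 there exists δ > 0 such that for every closed interval [a,b] ⊆ U with x ∈ [a,b] and 0 < b − a < δ one has |(f(b) − f(a))/(b − a) − L| < ε. -/
import Mathlib


/-- A real function `f` on an open set `U ⊆ ℝ` is differentiable at `x ∈ U` with derivative
`L` if and only if the mean slopes of `f` over small closed intervals of `U` containing `x`
converge to `L`. -/
theorem hasDerivAt_iff_mean_slope (U : Set ℝ) (hU : IsOpen U) (f : ℝ → ℝ) (x : ℝ)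
    (hx : x ∈ U) (L : ℝ) :
    HasDerivAt f L x ↔
      ∀ ε > (0 : ℝ), ∃ δ > (0 : ℝ), ∀ a b : ℝ, Set.Icc a b ⊆ U → x ∈ Set.Icc a b →
        0 < b - a → b - a < δ → |(f b - f a) / (b - a) - L| < ε := by
  constructor
  · intro h ε hε
    have hlo := hasDerivAt_iff_isLittleO.1 h
    have hev := hlo.def (half_pos hε)
    rw [Metric.eventually_nhds_iff] at hev
    obtain ⟨δ, hδ, hball⟩ := hev
    refine ⟨δ, hδ, fun a b _ hxab hpos hlt => ?_⟩
    obtain ⟨hax, hxb⟩ := hxab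
    have ha : dist a x < δ := by
      rw [Real.dist_eq, abs_of_nonpos (by linarith)]
      linarith
    have hb : dist b x < δ := by
      rw [Real.dist_eq, abs_of_nonneg (by linarith)]
      linarith
    have h1 := hball ha
    have h2 := hball hb
    simp only [Real.norm_eq_abs, smul_eq_mul] at h1 h2
    rw [abs_of_nonpos (show a - x ≤ 0 by linarith)] at h1
    rw [abs_of_nonneg (show (0:ℝ) ≤ b - x by linarith)] at h2
    have key : |f b - f a - (b - a) * L| ≤ ε / 2 * (b - a) := by
      have : f b - f a - (b - a) * L =
          (f b - f x - (b - x) * L) - (f a - f x - (a - x) * L) := by ring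
      rw [this]
      calc |(f b - f x - (b - x) * L) - (f a - f x - (a - x) * L)|
          ≤ |f b - f x - (b - x) * L| + |f a - f x - (a - x) * L| := abs_sub _ _
        _ ≤ ε / 2 * (b - x) + ε / 2 * -(a - x) := add_le_add h2 h1
        _ = ε / 2 * (b - a) := by ring
    have : |(f b - f a) / (b - a) - L| = |f b - f a - (b - a) * L| / (b - a) := by
      have harg : (f b - f a) / (b - a) - L = (f b - f a - (b - a) * L) / (b - a) := by
        field_simp
      rw [harg, abs_div, abs_of_pos hpos]
    rw [this, div_lt_iff₀ hpos]
    calc |f b - f a - (b - a) * L| ≤ ε / 2 * (b - a) := key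
      _ < ε * (b - a) := by nlinarith
  · intro h
    rw [hasDerivAt_iff_tendsto_slope, Metric.tendsto_nhdsWithin_nhds]
    intro ε hε
    obtain ⟨δ, hδ, hslope⟩ := h ε hε
    obtain ⟨δ', hδ', hball⟩ := Metric.isOpen_iff.1 hU x hx
    refine ⟨min δ δ', lt_min hδ hδ', fun {y} hy hdist => ?_⟩
    have hne : y ≠ x := hy
    have hydx : |y - x| < min δ δ' := by rwa [Real.dist_eq] at hdist
    have hδ'' : |y - x| < δ' := lt_of_lt_of_le hydx (min_le_right _ _)
    have hδd : |y - x| < δ := lt_of_lt_of_le hydx (min_le_left _ _)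
    rcases lt_or_gt_of_ne hne with hyx | hxy
    · -- y < x : interval [y, x]
      have hxy' : x - y < δ' := by
        rwa [abs_sub_comm, abs_of_nonneg (show (0:ℝ) ≤ x - y by linarith)] at hδ''
      have hxyd : x - y < δ := by
        rwa [abs_sub_comm, abs_of_nonneg (show (0:ℝ) ≤ x - y by linarith)] at hδd
      have hsub : Set.Icc y x ⊆ U := fun z hz => hball (by
        rw [Metric.mem_ball, Real.dist_eq, abs_of_nonpos (by linarith [hz.2] : z - x ≤ 0)]
        linarith [hz.1])
      have := hslope y x hsub ⟨le_of_lt hyx, le_refl x⟩ (by linarith) (by linarith)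
      rw [Real.dist_eq, slope_def_field]
      have heq : (f y - f x) / (y - x) = (f x - f y) / (x - y) := by
        rw [← neg_sub (f x) (f y), ← neg_sub x y, neg_div_neg_eq]
      rw [heq]; exact this
    · -- x < y : interval [x, y]
      have hxy' : y - x < δ' := by
        rwa [abs_of_nonneg (show (0:ℝ) ≤ y - x by linarith)] at hδ''
      have hxyd : y - x < δ := by
        rwa [abs_of_nonneg (show (0:ℝ) ≤ y - x by linarith)] at hδd
      have hsub : Set.Icc x y ⊆ U := fun z hz => hball (by
        rw [Metric.mem_ball, Real.dist_eq, abs_of_nonneg (by linarith [hz.1] : 0 ≤ z - x)]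
        linarith [hz.2])
      have := hslope x y hsub ⟨le_refl x, le_of_lt hxy⟩ (by linarith) (by linarith)
      rw [Real.dist_eq, slope_def_field]
      exact this
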